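/- The vector-valued propensity score e(x) = (P(Z_1=1|x), ..., P(Z_G=1|x)) is a balancing score: Z is conditionally independent of x given e(x); equivalently, P(Z_g = 1 | e(x)) = e_g(x) almost surely for each g. -/

import Mathlib

open MeasureTheory ProbabilityTheory

/-- **(Imai and Van Dyk)** The vector-valued propensity score
`e(x) = (P(Z₁=1|x), …, P(Z_G=1|x))` is a balancing score: `Z` is conditionally
independent of `x` given `e(x)`; equivalently,
`P(Z g = 1 | e(x)) = e g (x)` almost surely for each `g`. -/
theorem stmt_13
    {Ω : Type*} [MeasurableSpace Ω] [StandardBorelSpace Ω]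
    {X : Type*} [MeasurableSpace X]
    (μ : Measure Ω) [IsProbabilityMeasure μ]
    (G : ℕ) (Z : Fin G → Ω → ℝ) (x : Ω → X)
    (hZ01 : ∀ g ω, Z g ω = 0 ∨ Z g ω = 1)
    (hZsum : ∀ ω, ∑ g, Z g ω = 1)
    (hZmeas : ∀ g, Measurable (Z g))
    (hx : Measurable x)
    -- the vector propensity score e, with e ω g = P(Z g = 1 | x) (ω)
    (e : Ω → Fin G → ℝ)
    (he : e = fun ω g => (μ[Z g | MeasurableSpace.comap x inferInstance]) ω)
    (hme : MeasurableSpace.comap e inferInstance ≤ (inferInstance : MeasurableSpace Ω)) :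
    CondIndepFun (MeasurableSpace.comap e inferInstance) hme
      (fun ω g => Z g ω) x μ ∧
    ∀ g, μ[Z g | MeasurableSpace.comap e inferInstance] =ᵐ[μ] fun ω => e ω g := by
  classical
  have hmx : (MeasurableSpace.comap x inferInstance) ≤ (inferInstance : MeasurableSpace Ω) := hx.comap_le
  have heMx : Measurable[(MeasurableSpace.comap x inferInstance)] e := by
    rw [he]
    have h : ∀ g, Measurable[(MeasurableSpace.comap x inferInstance)]
        fun ω => (μ[Z g | (MeasurableSpace.comap x inferInstance)]) ω :=
      fun g => stronglyMeasurable_condExp.measurable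
    exact (@measurable_pi_iff Ω (Fin G) _ (MeasurableSpace.comap x inferInstance) _ _).mpr h
  have hm_le_mx : (MeasurableSpace.comap e inferInstance) ≤ (MeasurableSpace.comap x inferInstance) := heMx.comap_le
  have heM : Measurable[(MeasurableSpace.comap e inferInstance)] e := Measurable.of_comap_le le_rfl
  have heg : ∀ g, StronglyMeasurable[(MeasurableSpace.comap e inferInstance)] (fun ω => e ω g) := fun g =>
    ((measurable_pi_apply g).comp heM).stronglyMeasurable
  have hZbd : ∀ g ω, ‖Z g ω‖ ≤ 1 := by
    intro g ω; rcases hZ01 g ω with h | h <;> simp [h]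
  have hZint : ∀ g, Integrable (Z g) μ := fun g =>
    (integrable_const (1 : ℝ)).mono' (hZmeas g).aestronglyMeasurable
      (Filter.Eventually.of_forall (hZbd g))
  have heint : ∀ g, Integrable (fun ω => e ω g) μ := by
    intro g
    have : (fun ω => e ω g) = μ[Z g | (MeasurableSpace.comap x inferInstance)] := by rw [he]
    rw [this]; exact integrable_condExp
  -- second claim
  have key2 : ∀ g, μ[Z g | (MeasurableSpace.comap e inferInstance)] =ᵐ[μ] fun ω => e ω g := by
    intro g
    have he' : (fun ω => e ω g) = μ[Z g | (MeasurableSpace.comap x inferInstance)] := by rw [he]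
    have h1 : μ[μ[Z g | (MeasurableSpace.comap x inferInstance)] | (MeasurableSpace.comap e inferInstance)] =ᵐ[μ] μ[Z g | (MeasurableSpace.comap e inferInstance)] := condExp_condExp_of_le hm_le_mx hmx
    have h2 : μ[(fun ω => e ω g) | (MeasurableSpace.comap e inferInstance)] = fun ω => e ω g :=
      condExp_of_stronglyMeasurable (hm_le_mx.trans hmx) (heg g) (heint g)
    calc μ[Z g | (MeasurableSpace.comap e inferInstance)] =ᵐ[μ] μ[μ[Z g | (MeasurableSpace.comap x inferInstance)] | (MeasurableSpace.comap e inferInstance)] := h1.symm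
      _ = μ[(fun ω => e ω g) | (MeasurableSpace.comap e inferInstance)] := by rw [← he']
      _ = fun ω => e ω g := h2
  refine ⟨?_, key2⟩
  -- first claim
  have hZvec : Measurable (fun ω g => Z g ω) := measurable_pi_lambda _ hZmeas
  rw [condIndepFun_iff_condExp_inter_preimage_eq_mul hZvec hx]
  intro s t hs ht
  set A : Set Ω := (fun ω g => Z g ω) ⁻¹' s with hAdef
  set B : Set Ω := x ⁻¹' t with hBdef
  set iB : Ω → ℝ := B.indicator (fun _ => (1 : ℝ)) with hiBdef
  have hBmx : MeasurableSet[(MeasurableSpace.comap x inferInstance)] B := ⟨t, ht, rfl⟩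
  have hBmeas : MeasurableSet B := hmx _ hBmx
  have hiBint : Integrable iB μ := (integrable_const (1 : ℝ)).indicator hBmeas
  have hiBbd : ∀ ω, ‖iB ω‖ ≤ 1 := by
    intro ω
    simp only [hiBdef, Set.indicator_apply]
    split <;> simp
  -- key product lemma
  have keyK : ∀ g, μ[(fun ω => Z g ω * iB ω) | (MeasurableSpace.comap e inferInstance)]
      =ᵐ[μ] fun ω => e ω g * (μ[iB | (MeasurableSpace.comap e inferInstance)]) ω := by
    intro g
    have he' : (fun ω => e ω g) = μ[Z g | (MeasurableSpace.comap x inferInstance)] := by rw [he]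
    have hiBmx : StronglyMeasurable[(MeasurableSpace.comap x inferInstance)] iB :=
      stronglyMeasurable_const.indicator hBmx
    have hint1 : Integrable (iB * Z g) μ :=
      (hZint g).bdd_mul hiBint.aestronglyMeasurable (Filter.Eventually.of_forall hiBbd)
    have hstep1 : μ[iB * Z g | (MeasurableSpace.comap x inferInstance)] =ᵐ[μ] iB * μ[Z g | (MeasurableSpace.comap x inferInstance)] :=
      condExp_mul_of_stronglyMeasurable_left hiBmx hint1 (hZint g)
    have hint2 : Integrable (iB * (fun ω => e ω g)) μ :=
      (heint g).bdd_mul hiBint.aestronglyMeasurable (Filter.Eventually.of_forall hiBbd)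
    have hint2' : Integrable ((fun ω => e ω g) * iB) μ := by
      rwa [mul_comm] at hint2
    have hstep2 : μ[(fun ω => e ω g) * iB | (MeasurableSpace.comap e inferInstance)] =ᵐ[μ] (fun ω => e ω g) * μ[iB | (MeasurableSpace.comap e inferInstance)] :=
      condExp_mul_of_stronglyMeasurable_left (heg g) hint2' hiBint
    have htower : μ[iB * Z g | (MeasurableSpace.comap e inferInstance)] =ᵐ[μ] μ[μ[iB * Z g | (MeasurableSpace.comap x inferInstance)] | (MeasurableSpace.comap e inferInstance)] :=
      (condExp_condExp_of_le hm_le_mx hmx).symm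
    have hcongr : μ[μ[iB * Z g | (MeasurableSpace.comap x inferInstance)] | (MeasurableSpace.comap e inferInstance)] =ᵐ[μ] μ[iB * μ[Z g | (MeasurableSpace.comap x inferInstance)] | (MeasurableSpace.comap e inferInstance)] :=
      condExp_congr_ae hstep1
    have hfun : (fun ω => Z g ω * iB ω) = iB * Z g := by
      funext ω; simp [mul_comm]
    have hfun2 : iB * μ[Z g | (MeasurableSpace.comap x inferInstance)] = (fun ω => e ω g) * iB := by
      rw [← he', mul_comm]
    calc μ[(fun ω => Z g ω * iB ω) | (MeasurableSpace.comap e inferInstance)] = μ[iB * Z g | (MeasurableSpace.comap e inferInstance)] := by rw [hfun]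
      _ =ᵐ[μ] μ[μ[iB * Z g | (MeasurableSpace.comap x inferInstance)] | (MeasurableSpace.comap e inferInstance)] := htower
      _ =ᵐ[μ] μ[iB * μ[Z g | (MeasurableSpace.comap x inferInstance)] | (MeasurableSpace.comap e inferInstance)] := hcongr
      _ = μ[(fun ω => e ω g) * iB | (MeasurableSpace.comap e inferInstance)] := by rw [hfun2]
      _ =ᵐ[μ] (fun ω => e ω g) * μ[iB | (MeasurableSpace.comap e inferInstance)] := hstep2
  -- the indicator of A is a finite sum of the Z g
  set u : Fin G → Fin G → ℝ := fun g g' => if g' = g then 1 else 0 with hudef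
  set S : Finset (Fin G) := Finset.univ.filter (fun g => u g ∈ s) with hSdef
  have hAind : ∀ ω, A.indicator (fun _ => (1 : ℝ)) ω = ∑ g ∈ S, Z g ω := by
    intro ω
    -- find the unique coordinate equal to 1
    have hnn : ∀ j, 0 ≤ Z j ω := fun j => by rcases hZ01 j ω with h | h <;> simp [h]
    have hex : ∃ g₀, Z g₀ ω = 1 := by
      by_contra h
      push_neg at h
      have hz : ∀ g, Z g ω = 0 := fun g => (hZ01 g ω).resolve_right (h g)
      have := hZsum ω
      simp [hz] at this
    obtain ⟨g₀, hg₀⟩ := hex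
    have hothers : ∀ g, g ≠ g₀ → Z g ω = 0 := by
      intro g hg
      by_contra h
      have hg1 : Z g ω = 1 := (hZ01 g ω).resolve_left h
      have hsub : ({g, g₀} : Finset (Fin G)) ⊆ Finset.univ := Finset.subset_univ _
      have h2 : ∑ j ∈ ({g, g₀} : Finset (Fin G)), Z j ω ≤ ∑ j, Z j ω :=
        Finset.sum_le_sum_of_subset_of_nonneg hsub (fun j _ _ => hnn j)
      rw [Finset.sum_pair hg, hg1, hg₀, hZsum ω] at h2
      linarith
    have hvec : (fun g => Z g ω) = u g₀ := by
      funext g'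
      by_cases hgg : g' = g₀
      · simp [hudef, hgg, hg₀]
      · simp [hudef, hgg, hothers g' hgg]
    have hmemA : ω ∈ A ↔ g₀ ∈ S := by
      simp only [hAdef, Set.mem_preimage, hSdef, Finset.mem_filter, Finset.mem_univ,
        true_and, hvec]
    have hsum : ∑ g ∈ S, Z g ω = if g₀ ∈ S then 1 else 0 := by
      have : ∀ g ∈ S, Z g ω = if g = g₀ then 1 else 0 := by
        intro g _
        by_cases hgg : g = g₀
        · simp [hgg, hg₀]
        · simp [hgg, hothers g hgg]
      rw [Finset.sum_congr rfl this, Finset.sum_ite_eq' S g₀ (fun _ => (1 : ℝ))]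
    rw [hsum, Set.indicator_apply]
    by_cases hA : ω ∈ A
    · rw [if_pos hA, if_pos (hmemA.1 hA)]
    · rw [if_neg hA, if_neg (fun h => hA (hmemA.2 h))]
  have hZiBint : ∀ g, Integrable (fun ω => Z g ω * iB ω) μ := by
    intro g
    have : Integrable (iB * Z g) μ :=
      (hZint g).bdd_mul hiBint.aestronglyMeasurable (Filter.Eventually.of_forall hiBbd)
    have hfun : (fun ω => Z g ω * iB ω) = iB * Z g := by
      funext ω; simp [mul_comm]
    rwa [hfun]
  -- LHS
  have hindAB : (A ∩ B).indicator (fun _ => (1 : ℝ))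
      = fun ω => ∑ g ∈ S, Z g ω * iB ω := by
    funext ω
    have h1 : (A ∩ B).indicator (fun _ => (1 : ℝ)) ω
        = A.indicator (fun _ => (1 : ℝ)) ω * iB ω := by
      simp only [Set.indicator_apply, Set.mem_inter_iff, hiBdef]
      by_cases hA : ω ∈ A <;> by_cases hB : ω ∈ B <;> simp [hA, hB]
    rw [h1, hAind ω, Finset.sum_mul]
  have hLHS : μ[(A ∩ B).indicator (fun _ => (1 : ℝ)) | (MeasurableSpace.comap e inferInstance)]
      =ᵐ[μ] fun ω => (∑ g ∈ S, e ω g) * (μ[iB | (MeasurableSpace.comap e inferInstance)]) ω := by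
    rw [hindAB]
    have hsum : (fun ω => ∑ g ∈ S, Z g ω * iB ω) = ∑ g ∈ S, fun ω => Z g ω * iB ω := by
      funext ω; simp
    rw [hsum]
    calc μ[∑ g ∈ S, (fun ω => Z g ω * iB ω) | (MeasurableSpace.comap e inferInstance)]
        =ᵐ[μ] ∑ g ∈ S, μ[(fun ω => Z g ω * iB ω) | (MeasurableSpace.comap e inferInstance)] :=
          condExp_finset_sum (fun g _ => hZiBint g) _
      _ =ᵐ[μ] fun ω => (∑ g ∈ S, e ω g) * (μ[iB | (MeasurableSpace.comap e inferInstance)]) ω := by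
          have : ∀ᵐ ω ∂μ, ∀ g, (μ[(fun ω => Z g ω * iB ω) | (MeasurableSpace.comap e inferInstance)]) ω
              = e ω g * (μ[iB | (MeasurableSpace.comap e inferInstance)]) ω :=
            ae_all_iff.2 fun g => keyK g
          filter_upwards [this] with ω hω
          simp only [Finset.sum_apply]
          rw [Finset.sum_congr rfl (fun g _ => hω g), ← Finset.sum_mul]
  -- RHS for A
  have hA_cond : μ[A.indicator (fun _ => (1 : ℝ)) | (MeasurableSpace.comap e inferInstance)] =ᵐ[μ] fun ω => ∑ g ∈ S, e ω g := by
    have hfun : A.indicator (fun _ => (1 : ℝ)) = ∑ g ∈ S, Z g := by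
      funext ω; rw [hAind ω]; simp
    rw [hfun]
    calc μ[∑ g ∈ S, Z g | (MeasurableSpace.comap e inferInstance)] =ᵐ[μ] ∑ g ∈ S, μ[Z g | (MeasurableSpace.comap e inferInstance)] :=
          condExp_finset_sum (fun g _ => hZint g) _
      _ =ᵐ[μ] fun ω => ∑ g ∈ S, e ω g := by
          have : ∀ᵐ ω ∂μ, ∀ g, (μ[Z g | (MeasurableSpace.comap e inferInstance)]) ω = e ω g :=
            ae_all_iff.2 fun g => key2 g
          filter_upwards [this] with ω hω
          simp only [Finset.sum_apply]
          exact Finset.sum_congr rfl (fun g _ => hω g)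
  -- conclude
  calc μ[(A ∩ B).indicator (fun _ => (1 : ℝ)) | (MeasurableSpace.comap e inferInstance)]
      =ᵐ[μ] fun ω => (∑ g ∈ S, e ω g) * (μ[iB | (MeasurableSpace.comap e inferInstance)]) ω := hLHS
    _ =ᵐ[μ] fun ω => (μ[A.indicator (fun _ => (1 : ℝ)) | (MeasurableSpace.comap e inferInstance)]) ω * (μ[iB | (MeasurableSpace.comap e inferInstance)]) ω := by
        filter_upwards [hA_cond] with ω hω
        rw [hω]
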